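/- Let (T,R) be a balanced rooted tree with a unrooted vertices, b edges, and r = |R| roots. Suppose that for every H in 𝒯^s_{≤} := 𝒯¹ ∪ … ∪ 𝒯^s one has e(H) ≥ (b/a)(v(H) − r), and that N = q^b and the probability that any fixed collection of copies of T with m total edges appears is q^{−a m}. If N_s(H) = O_s(N^{v(H)−r}) denotes the number of ordered s-tuples of rooted copies of T whose union is a copy of H, then Σ_{H ∈ 𝒯^s_{≤}} N_s(H)·q^{−a·e(H)} = O_s(1); i.e., the s-th moment of the number of rooted copies of T at a fixed root tuple is bounded independently of q. -/

import Mathlib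

/-- Moment computation in the random algebraic construction.  Let `ι` index the finite
family `𝒯^s_≤` of possible unions `H` of at most `s` rooted copies of `T`, with `v H`
vertices and `e H` edges, where `T` has `a` unrooted vertices, `b` edges and `r` roots.
Suppose the density condition `b·(v(H) - r) ≤ a·e(H)` holds for all `H`, and that the
number `Ns q H` of ordered `s`-tuples of rooted copies of `T` in the complete bipartite
graph on two copies of `𝔽_q^b` (of size `N = q^b`) whose union is a copy of `H`
satisfies `Ns q H ≤ C₁ · N^{v(H)-r}`.  Then the `s`-th moment
`Σ_H Ns(H) · q^{-a·e(H)}` is bounded by a constant independent of `q`. -/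
theorem stmt_12 (a b r s : ℕ) (ι : Type) [Fintype ι]
    (v e : ι → ℕ) (Ns : ℕ → ι → ℕ) (C₁ : ℝ)
    (hNs : ∀ q H, (Ns q H : ℝ) ≤ C₁ * (((q : ℝ) ^ b) ^ (v H - r)))
    (hdens : ∀ H, b * (v H - r) ≤ a * e H) :
    ∃ C : ℝ, ∀ q : ℕ, 1 ≤ q →
      ∑ H, (Ns q H : ℝ) * ((q : ℝ) ^ (a * e H))⁻¹ ≤ C := by
  refine ⟨(Fintype.card ι : ℝ) * max C₁ 0, fun q hq => ?_⟩
  have hq1 : (1 : ℝ) ≤ (q : ℝ) := by exact_mod_cast hq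
  have hq0 : (0 : ℝ) < (q : ℝ) := lt_of_lt_of_le one_pos hq1
  calc ∑ H, (Ns q H : ℝ) * ((q : ℝ) ^ (a * e H))⁻¹
      ≤ ∑ _H : ι, max C₁ 0 := by
        refine Finset.sum_le_sum fun H _ => ?_
        have hpow : ((q : ℝ) ^ b) ^ (v H - r) ≤ (q : ℝ) ^ (a * e H) := by
          rw [← pow_mul]
          exact pow_le_pow_right₀ hq1 (hdens H)
        have hpos : (0 : ℝ) < (q : ℝ) ^ (a * e H) := pow_pos hq0 _
        rw [mul_inv_le_iff₀ hpos, mul_comm]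
        calc (Ns q H : ℝ) ≤ C₁ * (((q : ℝ) ^ b) ^ (v H - r)) := hNs q H
          _ ≤ max C₁ 0 * ((q : ℝ) ^ (a * e H)) := by
              apply mul_le_mul (le_max_left _ _) hpow (by positivity) (le_max_right _ _)
          _ = (q : ℝ) ^ (a * e H) * max C₁ 0 := mul_comm _ _
    _ = (Fintype.card ι : ℝ) * max C₁ 0 := by
        rw [Finset.sum_const, Finset.card_univ, nsmul_eq_mul]
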